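/- Let φ be C⁴ on an open set containing [0,h], and H its cubic Hermite interpolant on [0,h]. Then there is a constant C such that for all x ∈ [0,h], |H'(x) - φ'(x)| ≤ C · M₄ · h³, where M₄ = sup |φ⁽⁴⁾| on [0,h]. -/

import Mathlib

open Set

lemma iterWithin_eq {f : ℝ → ℝ} {s t : Set ℝ} (hs : IsOpen s) (hts : t ⊆ s)
    (ht : UniqueDiffOn ℝ t) {n : ℕ∞} (hf : ContDiffOn ℝ n f s) {m : ℕ}
    (hm : (m : ℕ∞) ≤ n) {x : ℝ} (hx : x ∈ t) :
    iteratedDerivWithin m f t x = iteratedDeriv m f x := by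
  have h1 := (hf.ftaylorSeriesWithin hs.uniqueDiffOn).mono hts
  have h2 := h1.eq_iteratedFDerivWithin_of_uniqueDiffOn (by exact_mod_cast hm) ht hx
  have h3 : ftaylorSeriesWithin ℝ f s x m = iteratedFDerivWithin ℝ m f s x := rfl
  rw [iteratedDerivWithin_eq_iteratedFDerivWithin, iteratedDeriv_eq_iteratedFDeriv, ← h2, h3,
    iteratedFDerivWithin_of_isOpen m hs (hts hx)]

lemma taylor_global {f : ℝ → ℝ} {s : Set ℝ} (hs : IsOpen s) {n : ℕ}
    (hf : ContDiffOn ℝ (n+1 : ℕ) f s) {x₀ x : ℝ} (hx : x₀ < x) (hsub : Set.Icc x₀ x ⊆ s) :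
    ∃ x' ∈ Set.Ioo x₀ x,
      f x - ∑ i ∈ Finset.range (n+1), ((Nat.factorial i : ℝ)⁻¹ * (x - x₀)^i) * iteratedDeriv i f x₀
        = iteratedDeriv (n+1) f x' * (x - x₀)^(n+1) / Nat.factorial (n+1) := by
  have hIcc : UniqueDiffOn ℝ (Set.Icc x₀ x) := uniqueDiffOn_Icc hx
  have hfn : ContDiffOn ℝ n f s := hf.of_le (by exact_mod_cast Nat.le_succ n)
  have hfI : ContDiffOn ℝ n f (Set.Icc x₀ x) := hfn.mono hsub
  have hIooIcc : Set.Ioo x₀ x ⊆ Set.Icc x₀ x := Set.Ioo_subset_Icc_self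
  have hdiff : DifferentiableOn ℝ (iteratedDerivWithin n f (Set.Icc x₀ x)) (Set.Ioo x₀ x) := by
    have h1 : DifferentiableOn ℝ (iteratedDerivWithin n f s) s :=
      hf.differentiableOn_iteratedDerivWithin (by exact_mod_cast n.lt_succ_self)
        hs.uniqueDiffOn
    refine ((h1.mono (hIooIcc.trans hsub)).congr ?_)
    intro y hy
    rw [iterWithin_eq hs hsub hIcc hf (by exact_mod_cast Nat.le_succ n) (hIooIcc hy),
      iterWithin_eq hs subset_rfl hs.uniqueDiffOn hf (by exact_mod_cast Nat.le_succ n)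
        (hsub (hIooIcc hy))]
  obtain ⟨x', hx', heq⟩ := taylor_mean_remainder_lagrange hx.ne
    (by rwa [uIcc_of_le hx.le]) (by rwa [uIcc_of_le hx.le, uIoo_of_lt hx])
  rw [uIcc_of_le hx.le] at heq
  rw [uIoo_of_lt hx] at hx'
  rw [taylor_within_apply] at heq
  refine ⟨x', hx', ?_⟩
  have hsum : ∀ i ∈ Finset.range (n+1),
      ((Nat.factorial i : ℝ)⁻¹ * (x - x₀)^i) • iteratedDerivWithin i f (Set.Icc x₀ x) x₀
        = ((Nat.factorial i : ℝ)⁻¹ * (x - x₀)^i) * iteratedDeriv i f x₀ := by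
    intro i hi
    rw [smul_eq_mul, iterWithin_eq hs hsub hIcc hf
      (by exact_mod_cast Nat.le_succ_of_le (Nat.le_of_lt_succ (Finset.mem_range.mp hi)))
      (Set.left_mem_Icc.mpr hx.le)]
  rw [Finset.sum_congr rfl hsum] at heq
  rw [← iterWithin_eq hs hsub hIcc hf le_rfl (hIooIcc hx')]
  exact heq

set_option maxHeartbeats 1000000 in
theorem hermite_interpolation_gradient_error :
    ∃ C : ℝ, 0 < C ∧
      ∀ (h : ℝ), 0 < h →
      ∀ (s : Set ℝ), IsOpen s → Set.Icc (0:ℝ) h ⊆ s →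
      ∀ (φ : ℝ → ℝ), ContDiffOn ℝ 4 φ s →
      ∀ (M₄ : ℝ), (∀ x ∈ Set.Icc (0:ℝ) h, |iteratedDeriv 4 φ x| ≤ M₄) →
      ∀ (H : ℝ → ℝ),
        (∀ x, H x = φ 0 * (1 - 3 * (x / h) ^ 2 + 2 * (x / h) ^ 3)
            + φ h * (1 - 3 * (1 - x / h) ^ 2 + 2 * (1 - x / h) ^ 3)
            + h * (deriv φ 0 * ((x / h) * (1 - x / h) ^ 2)
                  - deriv φ h * ((1 - x / h) * (1 - (1 - x / h)) ^ 2))) →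
      ∀ x ∈ Set.Icc (0:ℝ) h, |deriv H x - deriv φ x| ≤ C * M₄ * h ^ 3 := by
  refine ⟨2, by norm_num, ?_⟩
  intro h hh s hs hsub φ hφ M₄ hM H hH x hx
  obtain ⟨hx0, hxh⟩ := hx
  have hne : h ≠ 0 := ne_of_gt hh
  have hM0 : 0 ≤ M₄ := le_trans (abs_nonneg _) (hM 0 ⟨le_refl 0, hh.le⟩)
  -- Taylor expansion of φ at 0 evaluated at h
  have hφ4 : ContDiffOn ℝ ((3+1 : ℕ) : ℕ∞) φ s := by exact_mod_cast hφ
  obtain ⟨y1, hy1, hAraw⟩ := taylor_global hs hφ4 hh hsub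
  norm_num [Finset.sum_range_succ, Nat.factorial] at hAraw
  have eA : φ h = φ 0 + deriv φ 0 * h + iteratedDeriv 2 φ 0 * h^2/2
      + iteratedDeriv 3 φ 0 * h^3/6 + iteratedDeriv 4 φ y1 * h^4/24 := by
    linear_combination hAraw
  -- Taylor expansion of deriv φ at 0
  have hφ' : ContDiffOn ℝ ((2+1 : ℕ) : ℕ∞) (deriv φ) s := by
    have := hφ.deriv_of_isOpen (m := 3) hs (by norm_num)
    exact_mod_cast this
  have k1 : ∀ m : ℕ, iteratedDeriv m (deriv φ) = iteratedDeriv (m+1) φ := by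
    intro m; exact (iteratedDeriv_succ' (n := m) (f := φ)).symm
  obtain ⟨y2, hy2, hBraw⟩ := taylor_global hs hφ' hh hsub
  simp only [k1] at hBraw
  norm_num [Finset.sum_range_succ, Nat.factorial] at hBraw
  have eB : deriv φ h = deriv φ 0 + iteratedDeriv 2 φ 0 * h
      + iteratedDeriv 3 φ 0 * h^2/2 + iteratedDeriv 4 φ y2 * h^3/6 := by
    linear_combination hBraw
  -- Taylor expansion of deriv φ at 0 evaluated at x
  have eC : ∃ RC : ℝ, deriv φ x = deriv φ 0 + iteratedDeriv 2 φ 0 * x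
      + iteratedDeriv 3 φ 0 * x^2/2 + RC ∧ |RC| ≤ M₄ * h^3/6 := by
    rcases eq_or_lt_of_le hx0 with h0 | h0
    · refine ⟨0, by rw [← h0]; ring, ?_⟩
      rw [abs_zero]
      exact div_nonneg (mul_nonneg hM0 (by positivity)) (by norm_num)
    · obtain ⟨y3, hy3, hCraw⟩ := taylor_global hs hφ' h0
        ((Set.Icc_subset_Icc le_rfl hxh).trans hsub)
      simp only [k1] at hCraw
      norm_num [Finset.sum_range_succ, Nat.factorial] at hCraw
      refine ⟨iteratedDeriv 4 φ y3 * x^3/6, by linear_combination hCraw, ?_⟩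
      have b1 : |iteratedDeriv 4 φ y3| ≤ M₄ := hM y3 ⟨hy3.1.le, hy3.2.le.trans hxh⟩
      have b2 : |x^3| ≤ h^3 := by
        rw [abs_of_nonneg (by positivity : (0:ℝ) ≤ x^3)]
        exact pow_le_pow_left₀ hx0 hxh 3
      rw [abs_div, abs_mul]
      have := mul_le_mul b1 b2 (abs_nonneg _) hM0
      rw [show |(6:ℝ)| = 6 by norm_num]
      linarith
  obtain ⟨RC, eC1, eC2⟩ := eC
  -- explicit cubic form of H
  have hHG : H = fun t : ℝ => φ 0 + deriv φ 0 * t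
      + ((3*(φ h - φ 0))/h^2 - (2*deriv φ 0 + deriv φ h)/h) * t^2
      + ((2*(φ 0 - φ h))/h^3 + (deriv φ 0 + deriv φ h)/h^2) * t^3 := by
    funext t
    rw [hH t]
    field_simp
    ring
  have p2 : HasDerivAt (fun t : ℝ => t^2) (2*x) x := by simpa using hasDerivAt_pow 2 x
  have p3 : HasDerivAt (fun t : ℝ => t^3) (3*x^2) x := by simpa using hasDerivAt_pow 3 x
  have hD : HasDerivAt (fun t : ℝ => φ 0 + deriv φ 0 * t
      + ((3*(φ h - φ 0))/h^2 - (2*deriv φ 0 + deriv φ h)/h) * t^2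
      + ((2*(φ 0 - φ h))/h^3 + (deriv φ 0 + deriv φ h)/h^2) * t^3)
      (0 + deriv φ 0 * 1
      + ((3*(φ h - φ 0))/h^2 - (2*deriv φ 0 + deriv φ h)/h) * (2*x)
      + ((2*(φ 0 - φ h))/h^3 + (deriv φ 0 + deriv φ h)/h^2) * (3*x^2)) x := by
    exact (((hasDerivAt_const x (φ 0)).add ((hasDerivAt_id' x).const_mul (deriv φ 0))).add
      (p2.const_mul _)).add (p3.const_mul _)
  have hderiv : deriv H x = deriv φ 0
      + ((3*(φ h - φ 0))/h^2 - (2*deriv φ 0 + deriv φ h)/h) * (2*x)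
      + ((2*(φ 0 - φ h))/h^3 + (deriv φ 0 + deriv φ h)/h^2) * (3*x^2) := by
    rw [hHG, hD.deriv]; ring
  -- key identity
  have key : deriv H x - deriv φ x
      = iteratedDeriv 4 φ y1 * (x*h^2 - x^2*h)/4
        + iteratedDeriv 4 φ y2 * (3*x^2*h - 2*x*h^2)/6 - RC := by
    rw [hderiv, eC1, eA, eB]
    field_simp
    ring
  -- bounds
  have b1 : |iteratedDeriv 4 φ y1| ≤ M₄ := hM y1 (Set.Ioo_subset_Icc_self hy1)
  have b2 : |iteratedDeriv 4 φ y2| ≤ M₄ := hM y2 (Set.Ioo_subset_Icc_self hy2)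
  have hint1 : x*(h*h) ≤ h*(h*h) :=
    mul_le_mul_of_nonneg_right hxh (mul_nonneg hh.le hh.le)
  have hint2 : x*x ≤ h*h := mul_self_le_mul_self hx0 hxh
  have hint3 : (x*x)*h ≤ (h*h)*h := mul_le_mul_of_nonneg_right hint2 hh.le
  have hint4 : 0 ≤ x*(h*(h-x)) :=
    mul_nonneg hx0 (mul_nonneg hh.le (sub_nonneg.2 hxh))
  have hint5 : x*(h*(h-x)) ≤ h*(h*(h-x)) :=
    mul_le_mul_of_nonneg_right hxh (mul_nonneg hh.le (sub_nonneg.2 hxh))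
  have hint6 : 0 ≤ x*(x*h) := mul_nonneg hx0 (mul_nonneg hx0 hh.le)
  have hint7 : 0 ≤ (h*h)*x := mul_nonneg (mul_nonneg hh.le hh.le) hx0
  have c1 : |x*h^2 - x^2*h| ≤ h^3 := by
    rw [abs_le]; constructor <;> nlinarith [hint1, hint3, hint4, hint5, hint6, hint7]
  have c2 : |3*x^2*h - 2*x*h^2| ≤ 5*h^3 := by
    rw [abs_le]; constructor <;> nlinarith [hint1, hint3, hint4, hint5, hint6, hint7]
  have t1 : |iteratedDeriv 4 φ y1 * (x*h^2 - x^2*h)/4| ≤ M₄ * h^3/4 := by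
    rw [abs_div, abs_mul, show |(4:ℝ)| = 4 by norm_num]
    have := mul_le_mul b1 c1 (abs_nonneg _) hM0
    linarith
  have t2 : |iteratedDeriv 4 φ y2 * (3*x^2*h - 2*x*h^2)/6| ≤ 5 * (M₄ * h^3)/6 := by
    rw [abs_div, abs_mul, show |(6:ℝ)| = 6 by norm_num]
    have := mul_le_mul b2 c2 (abs_nonneg _) hM0
    linarith
  have habs : |deriv H x - deriv φ x|
      ≤ |iteratedDeriv 4 φ y1 * (x*h^2 - x^2*h)/4|
        + |iteratedDeriv 4 φ y2 * (3*x^2*h - 2*x*h^2)/6| + |RC| := by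
    rw [key, sub_eq_add_neg]
    refine (abs_add_le _ _).trans ?_
    rw [abs_neg]
    exact add_le_add (abs_add_le _ _) le_rfl
  have hfin : (0:ℝ) ≤ M₄ * h^3 := mul_nonneg hM0 (by positivity)
  nlinarith [habs, t1, t2, eC2]
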